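/- arXiv:1607.07667 — 4 statements merged into one kernel-verified Lean document; each statement's English description precedes it below -/
import Mathlib

section
/- Let A' and A'' be graded-commutative unital algebras over a field F, and let A = A' ⊗ A'' with the graded tensor product multiplication. Then the s-th zero-divisor cup-length of A is at least the sum of the s-th zero-divisor cup-lengths of A' and A''; that is, zcl_s(A) ≥ zcl_s(A') + zcl_s(A''), where zcl_s(B) denotes the maximal number of elements in the kernel of the iterated multiplication map μ_s : B^{⊗s} → B whose product is nonzero. -/
open scoped TensorProduct

/-- The iterated multiplication `μ_s : A^{⊗s} → A`. -/
noncomputable def muS (F : Type*) [Field F] (A : Type*) [Ring A] [Algebra F A] (s : ℕ) :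
    (⨂[F] _ : Fin s, A) →ₗ[F] A :=
  PiTensorProduct.lift (MultilinearMap.mkPiAlgebraFin F s A)

/-- A bilinear multiplication `m` on `A^{⊗s}` is the *Koszul-signed* (graded tensor product)
multiplication with respect to a grading `𝒜` of `A` if on pure tensors of homogeneous elements
it is slotwise multiplication twisted by the usual Koszul sign. -/
def IsKoszulMul (F : Type*) [Field F] {A : Type*} [Ring A] [Algebra F A]
    (𝒜 : ℕ → Submodule F A) {s : ℕ}
    (m : (⨂[F] _ : Fin s, A) →ₗ[F] (⨂[F] _ : Fin s, A) →ₗ[F] ⨂[F] _ : Fin s, A) : Prop :=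
  ∀ (da db : Fin s → ℕ) (a b : Fin s → A), (∀ i, a i ∈ 𝒜 (da i)) → (∀ i, b i ∈ 𝒜 (db i)) →
    m (PiTensorProduct.tprod F a) (PiTensorProduct.tprod F b) =
      ((-1 : F) ^ (∑ ij : Fin s × Fin s, if ij.1 < ij.2 then db ij.1 * da ij.2 else 0)) •
        PiTensorProduct.tprod F (fun i => a i * b i)

/-- `zcl_s(A) ≥ t`: there are `t` elements of the kernel of `μ_s : A^{⊗s} → A` (i.e. `s`-th
zero-divisors of `A`) whose product — taken with respect to the multiplication `m` on
`A^{⊗s}` — is nonzero. -/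
def HasZclGE (F : Type*) [Field F] {A : Type*} [Ring A] [Algebra F A] (s : ℕ)
    (m : (⨂[F] _ : Fin s, A) →ₗ[F] (⨂[F] _ : Fin s, A) →ₗ[F] ⨂[F] _ : Fin s, A)
    (t : ℕ) : Prop :=
  ∃ z : Fin t → ⨂[F] _ : Fin s, A,
    (∀ k, muS F A s (z k) = 0) ∧
      (List.ofFn z).foldr (fun a b => m a b)
        (PiTensorProduct.tprod F (fun _ : Fin s => (1 : A))) ≠ 0

/-- The natural `ℕ`-grading on the graded tensor product `𝒜 ᵍ⊗[F] ℬ`. -/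
noncomputable def gtGrading (F : Type*) [Field F] {A' A'' : Type*} [Ring A'] [Ring A'']
    [Algebra F A'] [Algebra F A''] (𝒜 : ℕ → Submodule F A') (ℬ : ℕ → Submodule F A'')
    [GradedAlgebra 𝒜] [GradedAlgebra ℬ] (k : ℕ) : Submodule F (𝒜 ᵍ⊗[F] ℬ) :=
  Submodule.span F {z | ∃ (i j : ℕ) (a : A') (b : A''),
    i + j = k ∧ a ∈ 𝒜 i ∧ b ∈ ℬ j ∧ z = GradedTensorProduct.of F 𝒜 ℬ (a ⊗ₜ[F] b)}

section Helpers

open PiTensorProduct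
open scoped Classical

variable {F : Type*} [Field F]

section OneAlg

variable {A : Type*} [Ring A] [Algebra F A] (𝒜 : ℕ → Submodule F A) [GradedAlgebra 𝒜] (s : ℕ)

theorem muS_tprod (a : Fin s → A) :
    muS F A s (PiTensorProduct.tprod F a) = (List.ofFn a).prod := by
  simp [muS, MultilinearMap.mkPiAlgebraFin_apply]

theorem tprod_eq_sum_proj (a : Fin s → A) :
    (PiTensorProduct.tprod F a : ⨂[F] _ : Fin s, A) =
      ∑ r ∈ Fintype.piFinset (fun i => (DirectSum.decompose 𝒜 (a i)).support),
        PiTensorProduct.tprod F (fun i => (DirectSum.decompose 𝒜 (a i) (r i) : A)) := by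
  classical
  calc (PiTensorProduct.tprod F a : ⨂[F] _ : Fin s, A)
      = PiTensorProduct.tprod F
          (fun i => ∑ k ∈ (DirectSum.decompose 𝒜 (a i)).support,
            (DirectSum.decompose 𝒜 (a i) k : A)) := by
        congr 1
        funext i
        exact (DirectSum.sum_support_decompose 𝒜 (a i)).symm
    _ = _ := MultilinearMap.map_sum_finset (PiTensorProduct.tprod F)
          (fun i k => (DirectSum.decompose 𝒜 (a i) k : A))
          (fun i => (DirectSum.decompose 𝒜 (a i)).support)

theorem homogSpan :
    Submodule.span F {x : ⨂[F] _ : Fin s, A | ∃ (d : Fin s → ℕ) (a : Fin s → A),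
      (∀ i, a i ∈ 𝒜 (d i)) ∧ x = PiTensorProduct.tprod F a} = ⊤ := by
  classical
  rw [eq_top_iff, ← PiTensorProduct.span_tprod_eq_top, Submodule.span_le]
  rintro x ⟨a, rfl⟩
  rw [tprod_eq_sum_proj 𝒜 s a]
  exact Submodule.sum_mem _ fun r _ => Submodule.subset_span
    ⟨r, fun i => (DirectSum.decompose 𝒜 (a i) (r i) : A),
      fun i => SetLike.coe_mem _, rfl⟩

theorem ext_homog {M : Type*} [AddCommMonoid M] [Module F M]
    {f g : (⨂[F] _ : Fin s, A) →ₗ[F] M}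
    (h : ∀ (d : Fin s → ℕ) (a : Fin s → A), (∀ i, a i ∈ 𝒜 (d i)) →
      f (PiTensorProduct.tprod F a) = g (PiTensorProduct.tprod F a)) : f = g := by
  refine LinearMap.ext_on (homogSpan 𝒜 s) ?_
  rintro x ⟨d, a, ha, rfl⟩
  exact h d a ha

/-- The projection onto the degree `k` part, as an endomorphism of `A`. -/
noncomputable def projLM (k : ℕ) : A →ₗ[F] A :=
  (𝒜 k).subtype ∘ₗ (DirectSum.component F ℕ (fun i => ↥(𝒜 i)) k) ∘ₗ
    (DirectSum.decomposeLinearEquiv 𝒜).toLinearMap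

theorem projLM_apply (k : ℕ) (a : A) :
    projLM 𝒜 k a = (DirectSum.decompose 𝒜 a k : A) := rfl

theorem projLM_same {j : ℕ} {a : A} (h : a ∈ 𝒜 j) : projLM 𝒜 j a = a := by
  rw [projLM_apply, DirectSum.decompose_of_mem_same 𝒜 h]

theorem projLM_ne {j k : ℕ} (hne : k ≠ j) {a : A} (h : a ∈ 𝒜 j) : projLM 𝒜 k a = 0 := by
  rw [projLM_apply, DirectSum.decompose_of_mem_ne 𝒜 h (Ne.symm hne)]

/-- Slotwise projection onto multidegree `d` on the `s`-fold tensor power. -/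
noncomputable def projT (d : Fin s → ℕ) :
    (⨂[F] _ : Fin s, A) →ₗ[F] ⨂[F] _ : Fin s, A :=
  PiTensorProduct.map (fun i => projLM 𝒜 (d i))

theorem projT_tprod (d : Fin s → ℕ) (a : Fin s → A) :
    projT 𝒜 s d (PiTensorProduct.tprod F a) =
      PiTensorProduct.tprod F (fun i => projLM 𝒜 (d i) (a i)) := by
  simp [projT]

theorem projT_tprod_homog (d da : Fin s → ℕ) (a : Fin s → A) (ha : ∀ i, a i ∈ 𝒜 (da i)) :
    projT 𝒜 s d (PiTensorProduct.tprod F a) =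
      if d = da then PiTensorProduct.tprod F a else 0 := by
  classical
  rw [projT_tprod]
  by_cases h : d = da
  · subst h
    rw [if_pos rfl]
    congr 1
    funext i
    exact projLM_same 𝒜 (ha i)
  · rw [if_neg h]
    obtain ⟨i, hi⟩ := Function.ne_iff.mp h
    have h0 : (fun i => projLM 𝒜 (d i) (a i)) i = 0 := projLM_ne 𝒜 hi (ha i)
    exact MultilinearMap.map_coord_zero _ i h0

theorem exists_projT_sum (x : ⨂[F] _ : Fin s, A) :
    ∃ S : Finset (Fin s → ℕ), (∀ d ∉ S, projT 𝒜 s d x = 0) ∧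
      ∑ d ∈ S, projT 𝒜 s d x = x := by
  classical
  induction x using PiTensorProduct.induction_on with
  | smul_tprod r a =>
    refine ⟨Fintype.piFinset (fun i => (DirectSum.decompose 𝒜 (a i)).support), ?_, ?_⟩
    · intro d hd
      obtain ⟨i, hi⟩ : ∃ i, d i ∉ (DirectSum.decompose 𝒜 (a i)).support := by
        by_contra hc
        push_neg at hc
        exact hd (Fintype.mem_piFinset.mpr hc)
      have h0 : projT 𝒜 s d (PiTensorProduct.tprod F a) = 0 := by
        rw [projT_tprod]
        refine MultilinearMap.map_coord_zero _ i ?_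
        show projLM 𝒜 (d i) (a i) = 0
        rw [projLM_apply, DFinsupp.notMem_support_iff.mp hi, Submodule.coe_zero]
      rw [map_smul, h0, smul_zero]
    · have step : ∀ d ∈ Fintype.piFinset (fun i => (DirectSum.decompose 𝒜 (a i)).support),
          projT 𝒜 s d (r • PiTensorProduct.tprod F a) =
            r • PiTensorProduct.tprod F (fun i => (DirectSum.decompose 𝒜 (a i) (d i) : A)) := by
        intro d _
        rw [map_smul, projT_tprod]
        rfl
      rw [Finset.sum_congr rfl step, ← Finset.smul_sum, ← tprod_eq_sum_proj 𝒜 s a]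
  | add x y hx hy =>
    obtain ⟨Sx, hx0, hxs⟩ := hx
    obtain ⟨Sy, hy0, hys⟩ := hy
    refine ⟨Sx ∪ Sy, fun d hd => ?_, ?_⟩
    · rw [map_add, hx0 d (fun h => hd (Finset.mem_union_left _ h)),
        hy0 d (fun h => hd (Finset.mem_union_right _ h)), add_zero]
    · have e1 : ∑ d ∈ Sx ∪ Sy, projT 𝒜 s d x = ∑ d ∈ Sx, projT 𝒜 s d x :=
        (Finset.sum_subset Finset.subset_union_left (fun d _ hd => hx0 d hd)).symm
      have e2 : ∑ d ∈ Sx ∪ Sy, projT 𝒜 s d y = ∑ d ∈ Sy, projT 𝒜 s d y :=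
        (Finset.sum_subset Finset.subset_union_right (fun d _ hd => hy0 d hd)).symm
      simp only [map_add]
      rw [Finset.sum_add_distrib, e1, e2, hxs, hys]

theorem exists_projT_ne_zero {x : ⨂[F] _ : Fin s, A} (hx : x ≠ 0) :
    ∃ d, projT 𝒜 s d x ≠ 0 := by
  by_contra hc
  push_neg at hc
  obtain ⟨S, _, hs⟩ := exists_projT_sum 𝒜 s x
  exact hx (by rw [← hs]; exact Finset.sum_eq_zero fun d _ => hc d)

end OneAlg

section Unzip

variable (V W : Type*) [AddCommGroup V] [AddCommGroup W] [Module F V] [Module F W]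

/-- Prepending an element to a tensor power, as a bilinear map. -/
noncomputable def consMap (s : ℕ) :
    V →ₗ[F] (⨂[F] _ : Fin s, V) →ₗ[F] ⨂[F] _ : Fin (s + 1), V :=
  LinearMap.comp
    (PiTensorProduct.lift (s := fun _ : Fin s => V)
      (E := ⨂[F] _ : Fin (s + 1), V)).toLinearMap
    ((PiTensorProduct.tprod F (s := fun _ : Fin (s + 1) => V)).curryLeft)

theorem consMap_tprod (s : ℕ) (v : V) (p : Fin s → V) :
    consMap (F := F) V s v (PiTensorProduct.tprod F p) =
      PiTensorProduct.tprod F (Fin.cons v p) := by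
  simp [consMap]

/-- Prepending a pair of elements to a pair of tensor powers. -/
noncomputable def consPair (s : ℕ) :
    (V ⊗[F] W) →ₗ[F] ((⨂[F] _ : Fin s, V) ⊗[F] (⨂[F] _ : Fin s, W)) →ₗ[F]
      ((⨂[F] _ : Fin (s + 1), V) ⊗[F] (⨂[F] _ : Fin (s + 1), W)) :=
  TensorProduct.curry
    ((TensorProduct.map (TensorProduct.lift (consMap (F := F) V s))
        (TensorProduct.lift (consMap (F := F) W s))).comp
      (TensorProduct.tensorTensorTensorComm F V W _ _).toLinearMap)

theorem consPair_tmul (s : ℕ) (v : V) (w : W) (p : Fin s → V) (q : Fin s → W) :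
    consPair (F := F) V W s (v ⊗ₜ[F] w)
        (PiTensorProduct.tprod F p ⊗ₜ[F] PiTensorProduct.tprod F q) =
      PiTensorProduct.tprod F (Fin.cons v p) ⊗ₜ[F] PiTensorProduct.tprod F (Fin.cons w q) := by
  simp [consPair, TensorProduct.tensorTensorTensorComm_tmul, consMap_tprod]

/-- The multilinear "unzip" map `(V ⊗ W)^s → V^{⊗s} ⊗ W^{⊗s}`. -/
noncomputable def unzipML : ∀ s : ℕ,
    MultilinearMap F (fun _ : Fin s => V ⊗[F] W)
      ((⨂[F] _ : Fin s, V) ⊗[F] (⨂[F] _ : Fin s, W))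
  | 0 => MultilinearMap.constOfIsEmpty F _
      ((PiTensorProduct.tprod F (fun i : Fin 0 => i.elim0 : Fin 0 → V)) ⊗ₜ[F]
        PiTensorProduct.tprod F (fun i : Fin 0 => i.elim0 : Fin 0 → W))
  | (s + 1) => LinearMap.uncurryLeft
      { toFun := fun x => (consPair (F := F) V W s x).compMultilinearMap (unzipML s)
        map_add' := fun x y => by
          ext p
          simp only [LinearMap.compMultilinearMap_apply, map_add, LinearMap.add_apply,
            MultilinearMap.add_apply]
        map_smul' := fun c x => by
          ext p
          simp only [LinearMap.compMultilinearMap_apply, map_smul, LinearMap.smul_apply,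
            MultilinearMap.smul_apply, RingHom.id_apply] }

theorem unzipML_tmul : ∀ (s : ℕ) (a : Fin s → V) (b : Fin s → W),
    unzipML (F := F) V W s (fun i => a i ⊗ₜ[F] b i) =
      PiTensorProduct.tprod F a ⊗ₜ[F] PiTensorProduct.tprod F b
  | 0, a, b => by
      rw [unzipML]
      have ha : a = (fun i : Fin 0 => i.elim0) := funext fun i => i.elim0
      have hb : b = (fun i : Fin 0 => i.elim0) := funext fun i => i.elim0
      subst ha; subst hb
      rfl
  | (s + 1), a, b => by
      rw [unzipML, LinearMap.uncurryLeft_apply]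
      simp only [LinearMap.coe_mk, AddHom.coe_mk, LinearMap.compMultilinearMap_apply]
      have ht : (Fin.tail fun i => a i ⊗ₜ[F] b i) =
          fun i : Fin s => Fin.tail a i ⊗ₜ[F] Fin.tail b i := rfl
      rw [ht, unzipML_tmul s (Fin.tail a) (Fin.tail b)]
      rw [consPair_tmul, Fin.cons_self_tail, Fin.cons_self_tail]

end Unzip

end Helpers

section Main

open PiTensorProduct GradedTensorProduct

variable {F : Type*} [Field F] {A' A'' : Type*} [Ring A'] [Ring A'']
  [Algebra F A'] [Algebra F A'']
  (𝒜 : ℕ → Submodule F A') (ℬ : ℕ → Submodule F A'')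
  [GradedAlgebra 𝒜] [GradedAlgebra ℬ] (s : ℕ)

/-- Slotwise `a ↦ a ⊗ 1` on tensor powers. -/
noncomputable def phiL : (⨂[F] _ : Fin s, A') →ₗ[F] ⨂[F] _ : Fin s, (𝒜 ᵍ⊗[F] ℬ) :=
  PiTensorProduct.map (fun _ => (GradedTensorProduct.includeLeft 𝒜 ℬ).toLinearMap)

/-- Slotwise `b ↦ 1 ⊗ b` on tensor powers. -/
noncomputable def phiR : (⨂[F] _ : Fin s, A'') →ₗ[F] ⨂[F] _ : Fin s, (𝒜 ᵍ⊗[F] ℬ) :=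
  PiTensorProduct.map (fun _ => (GradedTensorProduct.includeRight 𝒜 ℬ).toLinearMap)

theorem phiL_tprod (a : Fin s → A') :
    phiL 𝒜 ℬ s (PiTensorProduct.tprod F a) =
      PiTensorProduct.tprod F (fun i => GradedTensorProduct.includeLeft 𝒜 ℬ (a i)) := by
  simp [phiL]

theorem phiR_tprod (b : Fin s → A'') :
    phiR 𝒜 ℬ s (PiTensorProduct.tprod F b) =
      PiTensorProduct.tprod F (fun i => GradedTensorProduct.includeRight 𝒜 ℬ (b i)) := by
  simp [phiR]

theorem phiR_unit :
    phiR 𝒜 ℬ s (PiTensorProduct.tprod F (fun _ => (1 : A''))) =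
      PiTensorProduct.tprod F (fun _ => (1 : 𝒜 ᵍ⊗[F] ℬ)) := by
  rw [phiR_tprod]
  exact congrArg _ (funext fun i => map_one _)

theorem muS_phiL (x : ⨂[F] _ : Fin s, A') :
    muS F (𝒜 ᵍ⊗[F] ℬ) s (phiL 𝒜 ℬ s x) =
      GradedTensorProduct.includeLeft 𝒜 ℬ (muS F A' s x) := by
  have h : (muS F (𝒜 ᵍ⊗[F] ℬ) s).comp (phiL 𝒜 ℬ s) =
      (GradedTensorProduct.includeLeft 𝒜 ℬ).toLinearMap.comp (muS F A' s) := by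
    refine PiTensorProduct.ext (MultilinearMap.ext fun a => ?_)
    simp only [LinearMap.compMultilinearMap_apply, LinearMap.comp_apply]
    rw [phiL_tprod, muS_tprod, muS_tprod]
    show _ = GradedTensorProduct.includeLeft 𝒜 ℬ (List.ofFn a).prod
    rw [map_list_prod, List.map_ofFn]
    rfl
  exact LinearMap.congr_fun h x

theorem muS_phiR (x : ⨂[F] _ : Fin s, A'') :
    muS F (𝒜 ᵍ⊗[F] ℬ) s (phiR 𝒜 ℬ s x) =
      GradedTensorProduct.includeRight 𝒜 ℬ (muS F A'' s x) := by
  have h : (muS F (𝒜 ᵍ⊗[F] ℬ) s).comp (phiR 𝒜 ℬ s) =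
      (GradedTensorProduct.includeRight 𝒜 ℬ).toLinearMap.comp (muS F A'' s) := by
    refine PiTensorProduct.ext (MultilinearMap.ext fun a => ?_)
    simp only [LinearMap.compMultilinearMap_apply, LinearMap.comp_apply]
    rw [phiR_tprod, muS_tprod, muS_tprod]
    show _ = GradedTensorProduct.includeRight 𝒜 ℬ (List.ofFn a).prod
    rw [map_list_prod, List.map_ofFn]
    rfl
  exact LinearMap.congr_fun h x

theorem mem_gtGrading_left {k : ℕ} {a : A'} (h : a ∈ 𝒜 k) :
    GradedTensorProduct.includeLeft 𝒜 ℬ a ∈ gtGrading F 𝒜 ℬ k :=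
  Submodule.subset_span ⟨k, 0, a, 1, add_zero k, h, SetLike.one_mem_graded _, rfl⟩

theorem mem_gtGrading_right {k : ℕ} {b : A''} (h : b ∈ ℬ k) :
    GradedTensorProduct.includeRight 𝒜 ℬ b ∈ gtGrading F 𝒜 ℬ k :=
  Submodule.subset_span ⟨0, k, 1, b, zero_add k, SetLike.one_mem_graded _, h, rfl⟩

theorem mem_gtGrading_of {i j : ℕ} {a : A'} {b : A''} (ha : a ∈ 𝒜 i) (hb : b ∈ ℬ j) :
    GradedTensorProduct.of F 𝒜 ℬ (a ⊗ₜ[F] b) ∈ gtGrading F 𝒜 ℬ (i + j) :=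
  Submodule.subset_span ⟨i, j, a, b, rfl, ha, hb, rfl⟩

theorem incl_mul_incl (a : A') (b : A'') :
    GradedTensorProduct.includeLeft 𝒜 ℬ a * GradedTensorProduct.includeRight 𝒜 ℬ b =
      GradedTensorProduct.of F 𝒜 ℬ (a ⊗ₜ[F] b) :=
  GradedTensorProduct.tmul_one_mul_one_tmul 𝒜 ℬ a b

theorem inclL_mul_of {i : ℕ} (a : A') {u : A'} (hu : u ∈ 𝒜 i) (v : A'') :
    GradedTensorProduct.includeLeft 𝒜 ℬ a * GradedTensorProduct.of F 𝒜 ℬ (u ⊗ₜ[F] v) =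
      GradedTensorProduct.of F 𝒜 ℬ ((a * u) ⊗ₜ[F] v) :=
  GradedTensorProduct.tmul_one_mul_coe_tmul 𝒜 ℬ a (⟨u, hu⟩ : 𝒜 i) v

end Main

section Mult

open PiTensorProduct GradedTensorProduct

variable {F : Type*} [Field F] {A' A'' : Type*} [Ring A'] [Ring A'']
  [Algebra F A'] [Algebra F A'']
  (𝒜 : ℕ → Submodule F A') (ℬ : ℕ → Submodule F A'')
  [GradedAlgebra 𝒜] [GradedAlgebra ℬ] {s : ℕ}
  (m'' : (⨂[F] _ : Fin s, A'') →ₗ[F] (⨂[F] _ : Fin s, A'') →ₗ[F] ⨂[F] _ : Fin s, A'')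
  (m' : (⨂[F] _ : Fin s, A') →ₗ[F] (⨂[F] _ : Fin s, A') →ₗ[F] ⨂[F] _ : Fin s, A')
  (m : (⨂[F] _ : Fin s, 𝒜 ᵍ⊗[F] ℬ) →ₗ[F]
    (⨂[F] _ : Fin s, 𝒜 ᵍ⊗[F] ℬ) →ₗ[F] ⨂[F] _ : Fin s, 𝒜 ᵍ⊗[F] ℬ)

theorem phiR_mul (hm'' : IsKoszulMul F ℬ m'') (hm : IsKoszulMul F (gtGrading F 𝒜 ℬ) m)
    (x y : ⨂[F] _ : Fin s, A'') :
    m (phiR 𝒜 ℬ s x) (phiR 𝒜 ℬ s y) = phiR 𝒜 ℬ s (m'' x y) := by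
  have hB : ((m.comp (phiR 𝒜 ℬ s)).compl₂ (phiR 𝒜 ℬ s)) = m''.compr₂ (phiR 𝒜 ℬ s) := by
    refine ext_homog ℬ s ?_
    intro db b hb
    refine ext_homog ℬ s ?_
    intro db' b' hb'
    simp only [LinearMap.compl₂_apply, LinearMap.comp_apply, LinearMap.compr₂_apply]
    rw [phiR_tprod, phiR_tprod,
      hm db db' (fun i => GradedTensorProduct.includeRight 𝒜 ℬ (b i))
        (fun i => GradedTensorProduct.includeRight 𝒜 ℬ (b' i))
        (fun i => mem_gtGrading_right 𝒜 ℬ (hb i))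
        (fun i => mem_gtGrading_right 𝒜 ℬ (hb' i)),
      hm'' db db' b b' hb hb', map_smul, phiR_tprod]
    refine congrArg _ (congrArg _ (funext fun i => ?_))
    exact (map_mul (GradedTensorProduct.includeRight 𝒜 ℬ) (b i) (b' i)).symm
  have h1 := LinearMap.congr_fun (LinearMap.congr_fun hB x) y
  simpa only [LinearMap.compl₂_apply, LinearMap.comp_apply, LinearMap.compr₂_apply] using h1

theorem unit_mul_phiR (hm : IsKoszulMul F (gtGrading F 𝒜 ℬ) m) (y : ⨂[F] _ : Fin s, A'') :
    m (phiL 𝒜 ℬ s (PiTensorProduct.tprod F (fun _ => (1 : A')))) (phiR 𝒜 ℬ s y) =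
      phiR 𝒜 ℬ s y := by
  have hB : (m (phiL 𝒜 ℬ s (PiTensorProduct.tprod F (fun _ => (1 : A'))))).comp
      (phiR 𝒜 ℬ s) = phiR 𝒜 ℬ s := by
    refine ext_homog ℬ s ?_
    intro db b hb
    simp only [LinearMap.comp_apply]
    rw [phiL_tprod, phiR_tprod,
      hm (fun _ => 0) db (fun i => GradedTensorProduct.includeLeft 𝒜 ℬ (1 : A'))
        (fun i => GradedTensorProduct.includeRight 𝒜 ℬ (b i))
        (fun i => mem_gtGrading_left 𝒜 ℬ (SetLike.one_mem_graded _))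
        (fun i => mem_gtGrading_right 𝒜 ℬ (hb i))]
    simp only [mul_zero, ite_self, Finset.sum_const_zero, pow_zero, one_smul]
    refine congrArg _ (funext fun i => ?_)
    rw [_root_.map_one, one_mul]
  exact LinearMap.congr_fun hB y

/-- Auxiliary trilinear map `x ↦ u ↦ v ↦ m (φ' x) (m (φ' u) (φ'' v))`. -/
noncomputable def tri1 :
    (⨂[F] _ : Fin s, A') →ₗ[F] (⨂[F] _ : Fin s, A') →ₗ[F]
      (⨂[F] _ : Fin s, A'') →ₗ[F] ⨂[F] _ : Fin s, 𝒜 ᵍ⊗[F] ℬ where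
  toFun x := ((m.comp (phiL 𝒜 ℬ s)).compl₂ (phiR 𝒜 ℬ s)).compr₂ (m (phiL 𝒜 ℬ s x))
  map_add' x y := by
    refine LinearMap.ext fun u => LinearMap.ext fun v => ?_
    simp only [LinearMap.compr₂_apply, LinearMap.compl₂_apply, LinearMap.comp_apply, map_add,
      LinearMap.add_apply]
  map_smul' c x := by
    refine LinearMap.ext fun u => LinearMap.ext fun v => ?_
    simp only [LinearMap.compr₂_apply, LinearMap.compl₂_apply, LinearMap.comp_apply, map_smul,
      LinearMap.smul_apply, RingHom.id_apply]

/-- Auxiliary trilinear map `x ↦ u ↦ v ↦ m (φ' (m' x u)) (φ'' v)`. -/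
noncomputable def tri2 :
    (⨂[F] _ : Fin s, A') →ₗ[F] (⨂[F] _ : Fin s, A') →ₗ[F]
      (⨂[F] _ : Fin s, A'') →ₗ[F] ⨂[F] _ : Fin s, 𝒜 ᵍ⊗[F] ℬ where
  toFun x := ((m.comp (phiL 𝒜 ℬ s)).compl₂ (phiR 𝒜 ℬ s)).comp (m' x)
  map_add' x y := by
    refine LinearMap.ext fun u => LinearMap.ext fun v => ?_
    simp only [LinearMap.compl₂_apply, LinearMap.comp_apply, map_add, LinearMap.add_apply]
  map_smul' c x := by
    refine LinearMap.ext fun u => LinearMap.ext fun v => ?_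
    simp only [LinearMap.compl₂_apply, LinearMap.comp_apply, map_smul,
      LinearMap.smul_apply, RingHom.id_apply]

theorem phiL_assoc (hm' : IsKoszulMul F 𝒜 m') (hm : IsKoszulMul F (gtGrading F 𝒜 ℬ) m)
    (x u : ⨂[F] _ : Fin s, A') (v : ⨂[F] _ : Fin s, A'') :
    m (phiL 𝒜 ℬ s x) (m (phiL 𝒜 ℬ s u) (phiR 𝒜 ℬ s v)) =
      m (phiL 𝒜 ℬ s (m' x u)) (phiR 𝒜 ℬ s v) := by
  have hB : tri1 𝒜 ℬ m = tri2 𝒜 ℬ m' m := by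
    refine ext_homog 𝒜 s ?_
    intro da a ha
    refine ext_homog 𝒜 s ?_
    intro du u hu
    refine ext_homog ℬ s ?_
    intro db b hb
    show m (phiL 𝒜 ℬ s (PiTensorProduct.tprod F a))
        (m (phiL 𝒜 ℬ s (PiTensorProduct.tprod F u)) (phiR 𝒜 ℬ s (PiTensorProduct.tprod F b)))
      = m (phiL 𝒜 ℬ s (m' (PiTensorProduct.tprod F a) (PiTensorProduct.tprod F u)))
          (phiR 𝒜 ℬ s (PiTensorProduct.tprod F b))
    rw [phiL_tprod, phiL_tprod, phiR_tprod,
      hm du db (fun i => GradedTensorProduct.includeLeft 𝒜 ℬ (u i))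
        (fun i => GradedTensorProduct.includeRight 𝒜 ℬ (b i))
        (fun i => mem_gtGrading_left 𝒜 ℬ (hu i))
        (fun i => mem_gtGrading_right 𝒜 ℬ (hb i)),
      map_smul]
    have h1 : (fun i => GradedTensorProduct.includeLeft 𝒜 ℬ (u i) *
        GradedTensorProduct.includeRight 𝒜 ℬ (b i)) =
        fun i => GradedTensorProduct.of F 𝒜 ℬ (u i ⊗ₜ[F] b i) :=
      funext fun i => incl_mul_incl 𝒜 ℬ (u i) (b i)
    rw [h1,
      hm da (fun i => du i + db i) (fun i => GradedTensorProduct.includeLeft 𝒜 ℬ (a i))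
        (fun i => GradedTensorProduct.of F 𝒜 ℬ (u i ⊗ₜ[F] b i))
        (fun i => mem_gtGrading_left 𝒜 ℬ (ha i))
        (fun i => mem_gtGrading_of 𝒜 ℬ (hu i) (hb i)),
      smul_smul]
    have h2 : (fun i => GradedTensorProduct.includeLeft 𝒜 ℬ (a i) *
        GradedTensorProduct.of F 𝒜 ℬ (u i ⊗ₜ[F] b i)) =
        fun i => GradedTensorProduct.of F 𝒜 ℬ ((a i * u i) ⊗ₜ[F] b i) :=
      funext fun i => inclL_mul_of 𝒜 ℬ (a i) (hu i) (b i)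
    rw [h2, hm' da du a u ha hu, map_smul, map_smul, LinearMap.smul_apply, phiL_tprod,
      hm (fun i => da i + du i) db (fun i => GradedTensorProduct.includeLeft 𝒜 ℬ (a i * u i))
        (fun i => GradedTensorProduct.includeRight 𝒜 ℬ (b i))
        (fun i => mem_gtGrading_left 𝒜 ℬ (SetLike.mul_mem_graded (ha i) (hu i)))
        (fun i => mem_gtGrading_right 𝒜 ℬ (hb i)),
      smul_smul]
    have h3 : (fun i => GradedTensorProduct.includeLeft 𝒜 ℬ (a i * u i) *
        GradedTensorProduct.includeRight 𝒜 ℬ (b i)) =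
        fun i => GradedTensorProduct.of F 𝒜 ℬ ((a i * u i) ⊗ₜ[F] b i) :=
      funext fun i => incl_mul_incl 𝒜 ℬ _ _
    rw [h3]
    refine congrArg (fun c => c • _) ?_
    rw [← pow_add, ← pow_add]
    refine congrArg _ ?_
    rw [← Finset.sum_add_distrib, ← Finset.sum_add_distrib]
    refine Finset.sum_congr rfl fun ij _ => ?_
    by_cases hlt : ij.1 < ij.2
    · simp only [if_pos hlt]; ring
    · simp only [if_neg hlt]
  have h1 := LinearMap.congr_fun (LinearMap.congr_fun (LinearMap.congr_fun hB x) u) v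
  simpa only [tri1, tri2, LinearMap.coe_mk, AddHom.coe_mk, LinearMap.compr₂_apply,
    LinearMap.compl₂_apply, LinearMap.comp_apply] using h1

end Mult

open PiTensorProduct GradedTensorProduct in
/-- Let `A'`, `A''` be graded-commutative unital algebras over a field `F`
and let `A = A' ⊗ A''` be their graded tensor product (with Koszul-signed multiplication).
Then `zcl_s(A) ≥ zcl_s(A') + zcl_s(A'')`, where all products of `s`-th zero-divisors are
taken with respect to the Koszul-signed multiplications on the `s`-fold tensor powers. -/
theorem stmt0 (F : Type*) [Field F] (A' A'' : Type*) [Ring A'] [Ring A'']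
    [Algebra F A'] [Algebra F A'']
    (𝒜 : ℕ → Submodule F A') (ℬ : ℕ → Submodule F A'')
    [GradedAlgebra 𝒜] [GradedAlgebra ℬ]
    (hcomm' : ∀ (i j : ℕ) (a b : A'), a ∈ 𝒜 i → b ∈ 𝒜 j →
      a * b = ((-1 : F) ^ (i * j)) • (b * a))
    (hcomm'' : ∀ (i j : ℕ) (a b : A''), a ∈ ℬ i → b ∈ ℬ j →
      a * b = ((-1 : F) ^ (i * j)) • (b * a))
    (s : ℕ) (hs : 2 ≤ s)
    (m' : (⨂[F] _ : Fin s, A') →ₗ[F] (⨂[F] _ : Fin s, A') →ₗ[F] ⨂[F] _ : Fin s, A')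
    (hm' : IsKoszulMul F 𝒜 m')
    (m'' : (⨂[F] _ : Fin s, A'') →ₗ[F] (⨂[F] _ : Fin s, A'') →ₗ[F] ⨂[F] _ : Fin s, A'')
    (hm'' : IsKoszulMul F ℬ m'')
    (m : (⨂[F] _ : Fin s, 𝒜 ᵍ⊗[F] ℬ) →ₗ[F]
      (⨂[F] _ : Fin s, 𝒜 ᵍ⊗[F] ℬ) →ₗ[F] ⨂[F] _ : Fin s, 𝒜 ᵍ⊗[F] ℬ)
    (hm : IsKoszulMul F (gtGrading F 𝒜 ℬ) m)
    (t' t'' : ℕ)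
    (h' : HasZclGE F s m' t') (h'' : HasZclGE F s m'' t'') :
    HasZclGE F s m (t' + t'') := by
  classical
  obtain ⟨z', hz'0, hz'1⟩ := h'
  obtain ⟨z'', hz''0, hz''1⟩ := h''
  refine ⟨Fin.append (fun k => phiL 𝒜 ℬ s (z' k)) (fun k => phiR 𝒜 ℬ s (z'' k)), ?_, ?_⟩
  · intro k
    refine Fin.addCases (fun i => ?_) (fun i => ?_) k
    · rw [Fin.append_left, muS_phiL, hz'0 i, map_zero]
    · rw [Fin.append_right, muS_phiR, hz''0 i, map_zero]
  · have inner : ∀ l : List (⨂[F] _ : Fin s, A''),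
        (l.map (phiR 𝒜 ℬ s)).foldr (fun a b => m a b)
            (PiTensorProduct.tprod F fun _ => (1 : 𝒜 ᵍ⊗[F] ℬ)) =
          phiR 𝒜 ℬ s (l.foldr (fun a b => m'' a b)
            (PiTensorProduct.tprod F fun _ => (1 : A''))) := by
      intro l
      induction l with
      | nil =>
          simp only [List.map_nil, List.foldr_nil]
          exact (phiR_unit 𝒜 ℬ s).symm
      | cons hd tl ih =>
          simp only [List.map_cons, List.foldr_cons]
          rw [ih, phiR_mul 𝒜 ℬ m'' m hm'' hm]
    have outer : ∀ (l : List (⨂[F] _ : Fin s, A')) (v : ⨂[F] _ : Fin s, A''),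
        (l.map (phiL 𝒜 ℬ s)).foldr (fun a b => m a b) (phiR 𝒜 ℬ s v) =
          m (phiL 𝒜 ℬ s (l.foldr (fun a b => m' a b)
              (PiTensorProduct.tprod F fun _ => (1 : A'))))
            (phiR 𝒜 ℬ s v) := by
      intro l v
      induction l with
      | nil =>
          simp only [List.map_nil, List.foldr_nil]
          exact (unit_mul_phiR 𝒜 ℬ m hm v).symm
      | cons hd tl ih =>
          simp only [List.map_cons, List.foldr_cons]
          rw [ih, phiL_assoc 𝒜 ℬ m' m hm' hm]
    have e1 : List.ofFn (fun k => phiL 𝒜 ℬ s (z' k)) = (List.ofFn z').map (phiL 𝒜 ℬ s) := by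
      rw [List.map_ofFn]
      rfl
    have e2 : List.ofFn (fun k => phiR 𝒜 ℬ s (z'' k)) = (List.ofFn z'').map (phiR 𝒜 ℬ s) := by
      rw [List.map_ofFn]
      rfl
    rw [List.ofFn_fin_append, List.foldr_append, e2, inner, e1, outer]
    -- nonvanishing
    obtain ⟨da, hda⟩ := exists_projT_ne_zero 𝒜 s hz'1
    obtain ⟨db, hdb⟩ := exists_projT_ne_zero ℬ s hz''1
    obtain ⟨f, hfne⟩ : ∃ f : Module.Dual F (⨂[F] _ : Fin s, A'),
        f (projT 𝒜 s da ((List.ofFn z').foldr (fun a b => m' a b)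
          (PiTensorProduct.tprod F fun _ => (1 : A')))) ≠ 0 := by
      by_contra hc
      push_neg at hc
      exact hda ((Module.forall_dual_apply_eq_zero_iff F _).mp hc)
    obtain ⟨g, hgne⟩ : ∃ g : Module.Dual F (⨂[F] _ : Fin s, A''),
        g (projT ℬ s db ((List.ofFn z'').foldr (fun a b => m'' a b)
          (PiTensorProduct.tprod F fun _ => (1 : A'')))) ≠ 0 := by
      by_contra hc
      push_neg at hc
      exact hdb ((Module.forall_dual_apply_eq_zero_iff F _).mp hc)
    set Θ : (⨂[F] _ : Fin s, 𝒜 ᵍ⊗[F] ℬ) →ₗ[F]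
        ((⨂[F] _ : Fin s, A') ⊗[F] (⨂[F] _ : Fin s, A'')) :=
      (PiTensorProduct.lift (unzipML (F := F) A' A'' s)).comp
        (PiTensorProduct.map fun _ : Fin s =>
          (GradedTensorProduct.of F 𝒜 ℬ).symm.toLinearMap) with hΘdef
    have hΘ_tprod : ∀ (a : Fin s → A') (b : Fin s → A''),
        Θ (PiTensorProduct.tprod F fun i => GradedTensorProduct.of F 𝒜 ℬ (a i ⊗ₜ[F] b i)) =
          PiTensorProduct.tprod F a ⊗ₜ[F] PiTensorProduct.tprod F b := by
      intro a b
      rw [hΘdef]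
      simp only [LinearMap.comp_apply, PiTensorProduct.map_tprod]
      have hs1 : (fun i => (GradedTensorProduct.of F 𝒜 ℬ).symm.toLinearMap
          (GradedTensorProduct.of F 𝒜 ℬ (a i ⊗ₜ[F] b i))) = fun i => a i ⊗ₜ[F] b i := by
        funext i
        exact GradedTensorProduct.of_symm_of 𝒜 ℬ _
      rw [hs1, PiTensorProduct.lift.tprod, unzipML_tmul]
    set χ : (⨂[F] _ : Fin s, 𝒜 ᵍ⊗[F] ℬ) →ₗ[F] F :=
      (TensorProduct.lid F F).toLinearMap.comp
        ((TensorProduct.map (f.comp (projT 𝒜 s da)) (g.comp (projT ℬ s db))).comp Θ)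
      with hχdef
    have hχ : ∀ (a : Fin s → A') (b : Fin s → A''),
        χ (PiTensorProduct.tprod F fun i => GradedTensorProduct.of F 𝒜 ℬ (a i ⊗ₜ[F] b i)) =
          f (projT 𝒜 s da (PiTensorProduct.tprod F a)) *
            g (projT ℬ s db (PiTensorProduct.tprod F b)) := by
      intro a b
      rw [hχdef]
      simp only [LinearMap.comp_apply]
      rw [hΘ_tprod, TensorProduct.map_tmul]
      simp only [LinearMap.comp_apply, TensorProduct.lid_tmul, LinearEquiv.coe_coe,
        smul_eq_mul]
    have key : ∀ (x : ⨂[F] _ : Fin s, A') (y : ⨂[F] _ : Fin s, A''),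
        χ (m (phiL 𝒜 ℬ s x) (phiR 𝒜 ℬ s y)) =
          ((-1 : F) ^ (∑ ij : Fin s × Fin s, if ij.1 < ij.2 then db ij.1 * da ij.2 else 0)) *
            (f (projT 𝒜 s da x) * g (projT ℬ s db y)) := by
      have hB : ((m.comp (phiL 𝒜 ℬ s)).compl₂ (phiR 𝒜 ℬ s)).compr₂ χ =
          ((-1 : F) ^ (∑ ij : Fin s × Fin s, if ij.1 < ij.2 then db ij.1 * da ij.2 else 0)) •
            (((LinearMap.mul F F).comp (f.comp (projT 𝒜 s da))).compl₂
              (g.comp (projT ℬ s db))) := by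
        refine ext_homog 𝒜 s ?_
        intro da' a ha
        refine ext_homog ℬ s ?_
        intro db' b hb
        simp only [LinearMap.compr₂_apply, LinearMap.compl₂_apply, LinearMap.comp_apply,
          LinearMap.smul_apply, LinearMap.mul_apply']
        rw [phiL_tprod, phiR_tprod,
          hm da' db' (fun i => GradedTensorProduct.includeLeft 𝒜 ℬ (a i))
            (fun i => GradedTensorProduct.includeRight 𝒜 ℬ (b i))
            (fun i => mem_gtGrading_left 𝒜 ℬ (ha i))
            (fun i => mem_gtGrading_right 𝒜 ℬ (hb i)),
          map_smul]
        have h1 : (fun i => GradedTensorProduct.includeLeft 𝒜 ℬ (a i) *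
            GradedTensorProduct.includeRight 𝒜 ℬ (b i)) =
            fun i => GradedTensorProduct.of F 𝒜 ℬ (a i ⊗ₜ[F] b i) :=
          funext fun i => incl_mul_incl 𝒜 ℬ (a i) (b i)
        rw [h1, hχ a b, projT_tprod_homog 𝒜 s da da' a ha, projT_tprod_homog ℬ s db db' b hb]
        by_cases h2 : da = da'
        · by_cases h3 : db = db'
          · subst h2
            subst h3
            rw [if_pos rfl, if_pos rfl, smul_eq_mul]
          · simp only [if_neg h3, map_zero, mul_zero, smul_zero]
        · simp only [if_neg h2, map_zero, zero_mul, smul_zero]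
      intro x y
      have h4 := LinearMap.congr_fun (LinearMap.congr_fun hB x) y
      simpa only [LinearMap.compr₂_apply, LinearMap.compl₂_apply, LinearMap.comp_apply,
        LinearMap.smul_apply, LinearMap.mul_apply', smul_eq_mul] using h4
    intro h0
    have h5 := key ((List.ofFn z').foldr (fun a b => m' a b)
        (PiTensorProduct.tprod F fun _ => (1 : A')))
      ((List.ofFn z'').foldr (fun a b => m'' a b)
        (PiTensorProduct.tprod F fun _ => (1 : A'')))
    rw [h0, map_zero] at h5
    have h6 : ((-1 : F) ^ (∑ ij : Fin s × Fin s,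
        if ij.1 < ij.2 then db ij.1 * da ij.2 else 0)) ≠ 0 :=
      pow_ne_zero _ (neg_ne_zero.mpr one_ne_zero)
    exact (mul_ne_zero h6 (mul_ne_zero hfne hgne)) h5.symm
end

section
/- In A_g (g ≥ 2, n ≥ 2), for 2 ≤ j ≤ n the following relations hold: x_1·(x_j y_j) = x_1 ω_j + ω_1 x_j and y_1·(x_j y_j) = y_1 ω_j + ω_1 y_j. -/
/-- Generators of the rational cohomology of the `n`-fold power of a genus-`g` surface:
`a i p`, `b i p` in degree 1 and `w i` (the class `ω_i`) in degree 2.  The indices are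
`0`-based: `a i p` stands for the class `a_{i+1}(p+1)` of the paper. -/
inductive SurfGen (n g : ℕ) : Type
  | a (i : Fin n) (p : Fin g)
  | b (i : Fin n) (p : Fin g)
  | w (i : Fin n)

/-- The cohomological degree of a generator. -/
def SurfGen.deg {n g : ℕ} : SurfGen n g → ℕ
  | .a _ _ => 1
  | .b _ _ => 1
  | .w _ => 2

open FreeAlgebra in
/-- The defining relations of `H^*(Σ_g^{×n}; ℚ)`: within each factor,
`a_i(p)a_i(q) = b_i(p)b_i(q) = 0`, `a_i(p)b_i(q) = δ_{pq} ω_i`, together with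
graded (Koszul-signed) commutativity of the generators. -/
inductive SurfRel (n g : ℕ) :
    FreeAlgebra ℚ (SurfGen n g) → FreeAlgebra ℚ (SurfGen n g) → Prop
  | aa (i : Fin n) (p q : Fin g) :
      SurfRel n g (ι ℚ (SurfGen.a i p) * ι ℚ (SurfGen.a i q)) 0
  | bb (i : Fin n) (p q : Fin g) :
      SurfRel n g (ι ℚ (SurfGen.b i p) * ι ℚ (SurfGen.b i q)) 0
  | ab_eq (i : Fin n) (p : Fin g) :
      SurfRel n g (ι ℚ (SurfGen.a i p) * ι ℚ (SurfGen.b i p)) (ι ℚ (SurfGen.w i))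
  | ab_ne (i : Fin n) (p q : Fin g) : p ≠ q →
      SurfRel n g (ι ℚ (SurfGen.a i p) * ι ℚ (SurfGen.b i q)) 0
  | koszul (u v : SurfGen n g) :
      SurfRel n g (ι ℚ u * ι ℚ v)
        (((-1 : ℚ) ^ (u.deg * v.deg)) • (ι ℚ v * ι ℚ u))

/-- `H^*(Σ_g^{×n}; ℚ)`, presented by generators and relations. -/
def SurfCoh (n g : ℕ) : Type := RingQuot (SurfRel n g)

noncomputable instance (n g : ℕ) : Ring (SurfCoh n g) :=
  inferInstanceAs (Ring (RingQuot (SurfRel n g)))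

noncomputable instance (n g : ℕ) : Algebra ℚ (SurfCoh n g) :=
  inferInstanceAs (Algebra ℚ (RingQuot (SurfRel n g)))

/-- The class `a_{i+1}(p+1)`. -/
noncomputable def gA {n g : ℕ} (i : Fin n) (p : Fin g) : SurfCoh n g :=
  RingQuot.mkAlgHom ℚ (SurfRel n g) (FreeAlgebra.ι ℚ (SurfGen.a i p))

/-- The class `b_{i+1}(p+1)`. -/
noncomputable def gB {n g : ℕ} (i : Fin n) (p : Fin g) : SurfCoh n g :=
  RingQuot.mkAlgHom ℚ (SurfRel n g) (FreeAlgebra.ι ℚ (SurfGen.b i p))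

/-- The class `ω_{i+1}`. -/
noncomputable def gW {n g : ℕ} (i : Fin n) : SurfCoh n g :=
  RingQuot.mkAlgHom ℚ (SurfRel n g) (FreeAlgebra.ι ℚ (SurfGen.w i))

/-- The class `x_{i+1}(p+1)`: equal to `a_{i+1}(p+1)` unless `p+1 = 1` and `i+1 ≥ 2`, in which
case it is `a_{i+1}(1) - a_1(1)`. -/
noncomputable def gX {n g : ℕ} [NeZero n] [NeZero g] (i : Fin n) (p : Fin g) : SurfCoh n g :=
  if p = 0 ∧ i ≠ 0 then gA i p - gA 0 p else gA i p

/-- The class `y_{i+1}(p+1)`: equal to `b_{i+1}(p+1)` unless `p+1 = 1` and `i+1 ≥ 2`, in which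
case it is `b_{i+1}(1) - b_1(1)`. -/
noncomputable def gY {n g : ℕ} [NeZero n] [NeZero g] (i : Fin n) (p : Fin g) : SurfCoh n g :=
  if p = 0 ∧ i ≠ 0 then gB i p - gB 0 p else gB i p

/-- The relations defining the quotient algebra `A_g`: all products
`x_i(p)x_j(q)`, `x_i(p)y_j(q)`, `y_i(p)y_j(q)` with `p, q ≥ 2` and `i ≠ j` are set to zero. -/
inductive ARel (n g : ℕ) [NeZero n] [NeZero g] : SurfCoh n g → SurfCoh n g → Prop
  | xx (i j : Fin n) (p q : Fin g) : i ≠ j → p ≠ 0 → q ≠ 0 → ARel n g (gX i p * gX j q) 0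
  | xy (i j : Fin n) (p q : Fin g) : i ≠ j → p ≠ 0 → q ≠ 0 → ARel n g (gX i p * gY j q) 0
  | yy (i j : Fin n) (p q : Fin g) : i ≠ j → p ≠ 0 → q ≠ 0 → ARel n g (gY i p * gY j q) 0

/-- The algebra `A_g`: the quotient of `H^*(Σ_g^{×n}; ℚ)` by the ideal generated by the
products `x_i(p)x_j(q)`, `x_i(p)y_j(q)`, `y_i(p)y_j(q)` with `p, q ≥ 2`, `i ≠ j`. -/
def SurfA (n g : ℕ) [NeZero n] [NeZero g] : Type := RingQuot (ARel n g)

noncomputable instance (n g : ℕ) [NeZero n] [NeZero g] : Ring (SurfA n g) :=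
  inferInstanceAs (Ring (RingQuot (ARel n g)))

noncomputable instance (n g : ℕ) [NeZero n] [NeZero g] : Algebra ℚ (SurfA n g) :=
  inferInstanceAs (Algebra ℚ (RingQuot (ARel n g)))

/-- The quotient map `H^*(Σ_g^{×n}; ℚ) → A_g`. -/
noncomputable def toA (n g : ℕ) [NeZero n] [NeZero g] : SurfCoh n g →ₐ[ℚ] SurfA n g :=
  RingQuot.mkAlgHom ℚ (ARel n g)

/-- The image of `x_{i+1} = x_{i+1}(1)` in `A_g`. -/
noncomputable def xA {n g : ℕ} [NeZero n] [NeZero g] (i : Fin n) : SurfA n g :=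
  toA n g (gX i 0)

/-- The image of `y_{i+1} = y_{i+1}(1)` in `A_g`. -/
noncomputable def yA {n g : ℕ} [NeZero n] [NeZero g] (i : Fin n) : SurfA n g :=
  toA n g (gY i 0)

/-- The image of `ω_{i+1}` in `A_g`. -/
noncomputable def wA {n g : ℕ} [NeZero n] [NeZero g] (i : Fin n) : SurfA n g :=
  toA n g (gW i)

section Helpers

variable {n g : ℕ} [NeZero n] [NeZero g]

private lemma coh_rel {x y : FreeAlgebra ℚ (SurfGen n g)} (h : SurfRel n g x y) :
    RingQuot.mkAlgHom ℚ (SurfRel n g) x = RingQuot.mkAlgHom ℚ (SurfRel n g) y :=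
  RingQuot.mkAlgHom_rel ℚ h

private lemma gAA (i : Fin n) (p q : Fin g) : gA i p * gA i q = (0 : SurfCoh n g) := by
  have h := coh_rel (SurfRel.aa i p q)
  simp [gA, map_mul] at h
  exact h

private lemma gBB (i : Fin n) (p q : Fin g) : gB i p * gB i q = (0 : SurfCoh n g) := by
  have h := coh_rel (SurfRel.bb i p q)
  simp [gB, map_mul] at h
  exact h

private lemma gAB (i : Fin n) (p : Fin g) : gA i p * gB i p = (gW i : SurfCoh n g) := by
  have h := coh_rel (SurfRel.ab_eq i p)
  simp [gA, gB, gW, map_mul] at h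
  exact h

private lemma swapAA (i j : Fin n) (p q : Fin g) :
    gA i p * gA j q = -(gA j q * gA i p : SurfCoh n g) := by
  have h := coh_rel (SurfRel.koszul (SurfGen.a i p) (SurfGen.a j q))
  simp [gA, map_mul, map_smul, SurfGen.deg] at h
  exact h

private lemma swapBA (i j : Fin n) (p q : Fin g) :
    gB i p * gA j q = -(gA j q * gB i p : SurfCoh n g) := by
  have h := coh_rel (SurfRel.koszul (SurfGen.b i p) (SurfGen.a j q))
  simp [gA, gB, map_mul, map_smul, SurfGen.deg] at h
  exact h

private lemma swapWA (i j : Fin n) (q : Fin g) :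
    gW i * gA j q = (gA j q * gW i : SurfCoh n g) := by
  have h := coh_rel (SurfRel.koszul (SurfGen.w i) (SurfGen.a j q))
  simp [gA, gW, map_mul, map_smul, SurfGen.deg] at h
  exact h

private lemma swapWB (i j : Fin n) (q : Fin g) :
    gW i * gB j q = (gB j q * gW i : SurfCoh n g) := by
  have h := coh_rel (SurfRel.koszul (SurfGen.w i) (SurfGen.b j q))
  simp [gB, gW, map_mul, map_smul, SurfGen.deg] at h
  exact h

private lemma gWA (i : Fin n) (q : Fin g) : gW i * gA i q = (0 : SurfCoh n g) := by
  rw [← gAB i q, mul_assoc, swapBA, mul_neg, ← mul_assoc, gAA, zero_mul, neg_zero]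

private lemma gWB (i : Fin n) (q : Fin g) : gW i * gB i q = (0 : SurfCoh n g) := by
  rw [← gAB i q, mul_assoc, gBB, mul_zero]

private lemma key1 (j : Fin n) :
    gA 0 0 * ((gA j 0 - gA 0 0) * (gB j 0 - gB 0 0)) =
      (gA 0 0 * gW j + gW 0 * (gA j 0 - gA 0 0) : SurfCoh n g) := by
  have h1 : gA 0 0 * (gA j 0 * gB j 0) = (gA 0 0 * gW j : SurfCoh n g) := by
    rw [gAB]
  have h2 : gA 0 0 * (gA j 0 * gB 0 0) = -(gW 0 * gA j 0 : SurfCoh n g) := by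
    rw [← mul_assoc, swapAA, neg_mul, mul_assoc, gAB, ← swapWA]
  have h3 : gA 0 0 * (gA 0 0 * gB j 0) = (0 : SurfCoh n g) := by
    rw [← mul_assoc, gAA, zero_mul]
  have h4 : gA 0 0 * (gA 0 0 * gB 0 0) = (0 : SurfCoh n g) := by
    rw [← mul_assoc, gAA, zero_mul]
  have h5 : gW 0 * gA 0 0 = (0 : SurfCoh n g) := gWA 0 0
  rw [sub_mul, mul_sub, mul_sub, mul_sub, mul_sub, mul_sub, h1, h2, h3, h4,
    mul_sub, h5]
  abel

private lemma key2 (j : Fin n) :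
    gB 0 0 * ((gA j 0 - gA 0 0) * (gB j 0 - gB 0 0)) =
      (gB 0 0 * gW j + gW 0 * (gB j 0 - gB 0 0) : SurfCoh n g) := by
  have h1 : gB 0 0 * (gA j 0 * gB j 0) = (gB 0 0 * gW j : SurfCoh n g) := by
    rw [gAB]
  have h2 : gB 0 0 * (gA j 0 * gB 0 0) = (0 : SurfCoh n g) := by
    rw [← mul_assoc, swapBA, neg_mul, mul_assoc, gBB, mul_zero, neg_zero]
  have h3 : gB 0 0 * (gA 0 0 * gB j 0) = (-(gW 0 * gB j 0) : SurfCoh n g) := by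
    rw [← mul_assoc, swapBA, neg_mul, gAB]
  have h4 : gB 0 0 * (gA 0 0 * gB 0 0) = (0 : SurfCoh n g) := by
    rw [← mul_assoc, swapBA, neg_mul, mul_assoc, gBB, mul_zero, neg_zero]
  have h5 : gW 0 * gB 0 0 = (0 : SurfCoh n g) := gWB 0 0
  rw [sub_mul, mul_sub, mul_sub, mul_sub, mul_sub, mul_sub, h1, h2, h3, h4,
    mul_sub, h5]
  abel

end Helpers

/-- In `A_g` (`g ≥ 2`, `n ≥ 2`), for `2 ≤ j ≤ n`:
`x_1 (x_j y_j) = x_1 ω_j + ω_1 x_j` and `y_1 (x_j y_j) = y_1 ω_j + ω_1 y_j`. -/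
theorem stmt7 (n g : ℕ) [NeZero n] [NeZero g] (hn : 2 ≤ n) (hg : 2 ≤ g)
    (j : Fin n) (hj : j ≠ 0) :
    xA 0 * (xA j * yA j) = (xA 0 * wA j + wA 0 * xA j : SurfA n g) ∧
      yA 0 * (xA j * yA j) = (yA 0 * wA j + wA 0 * yA j : SurfA n g) := by
  have hx0 : xA (n := n) (g := g) 0 = toA n g (gA 0 0) := by simp [xA, gX]
  have hy0 : yA (n := n) (g := g) 0 = toA n g (gB 0 0) := by simp [yA, gY]
  have hxj : xA (n := n) (g := g) j = toA n g (gA j 0 - gA 0 0) := by simp [xA, gX, hj]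
  have hyj : yA (n := n) (g := g) j = toA n g (gB j 0 - gB 0 0) := by simp [yA, gY, hj]
  constructor
  · rw [hx0, hxj, hyj, ← map_mul, ← map_mul, key1 j, map_add, map_mul, map_mul]
    simp [wA]
  · rw [hy0, hxj, hyj, ← map_mul, ← map_mul, key2 j, map_add, map_mul, map_mul]
    simp [wA]
end

section
/- In A_g (g ≥ 2, n ≥ 3), for distinct i, j ∈ {2,…,n}: y_i · (x_i y_j) = −ω_i y_j + ω_1 y_j − y_1 x_i y_j + x_1 y_i y_j. -/
section Aux

variable {n g : ℕ}

/-- Auxiliary: the image of a generator in `SurfCoh`, typed in `SurfCoh`. -/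
noncomputable def gg {n g : ℕ} (u : SurfGen n g) : SurfCoh n g :=
  RingQuot.mkAlgHom ℚ (SurfRel n g) (FreeAlgebra.ι ℚ u)

lemma gen_swap (u v : SurfGen n g) (hu : u.deg = 1) (hv : v.deg = 1) :
    gg u * gg v = -(gg v * gg u) := by
  have h := RingQuot.mkAlgHom_rel ℚ (SurfRel.koszul u v)
  rw [map_mul, map_smul, map_mul, hu, hv] at h
  calc gg u * gg v = ((-1 : ℚ)) ^ (1 * 1) • (gg v * gg u) := h
    _ = -(gg v * gg u) := by rw [mul_one, pow_one, neg_one_smul]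

lemma swapAB (u v : SurfGen n g) (hu : u.deg = 1) (hv : v.deg = 1)
    (x : SurfCoh n g) :
    gg u * (gg v * x) = -(gg v * (gg u * x)) := by
  rw [← mul_assoc, gen_swap u v hu hv, neg_mul, mul_assoc]

lemma gA_swap (i i' : Fin n) (p p' : Fin g) :
    gA i p * gA i' p' = -(gA i' p' * gA i p) :=
  gen_swap (SurfGen.a i p) (SurfGen.a i' p') rfl rfl

lemma gA_swap' (i i' : Fin n) (p p' : Fin g) (x : SurfCoh n g) :
    gA i p * (gA i' p' * x) = -(gA i' p' * (gA i p * x)) :=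
  swapAB (SurfGen.a i p) (SurfGen.a i' p') rfl rfl x

lemma gB_swap (i i' : Fin n) (p p' : Fin g) :
    gB i p * gB i' p' = -(gB i' p' * gB i p) :=
  gen_swap (SurfGen.b i p) (SurfGen.b i' p') rfl rfl

lemma gB_swap' (i i' : Fin n) (p p' : Fin g) (x : SurfCoh n g) :
    gB i p * (gB i' p' * x) = -(gB i' p' * (gB i p * x)) :=
  swapAB (SurfGen.b i p) (SurfGen.b i' p') rfl rfl x

lemma gBA_swap (i i' : Fin n) (p p' : Fin g) :
    gB i p * gA i' p' = -(gA i' p' * gB i p) :=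
  gen_swap (SurfGen.b i p) (SurfGen.a i' p') rfl rfl

lemma gBA_swap' (i i' : Fin n) (p p' : Fin g) (x : SurfCoh n g) :
    gB i p * (gA i' p' * x) = -(gA i' p' * (gB i p * x)) :=
  swapAB (SurfGen.b i p) (SurfGen.a i' p') rfl rfl x

lemma gAA_zero (i : Fin n) (p q : Fin g) : gA i p * gA i q = 0 := by
  have h := RingQuot.mkAlgHom_rel ℚ (SurfRel.aa i p q)
  rw [map_mul, map_zero] at h
  exact h

lemma gAA_zero' (i : Fin n) (p q : Fin g) (x : SurfCoh n g) :
    gA i p * (gA i q * x) = 0 := by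
  rw [← mul_assoc, gAA_zero, zero_mul]

lemma gBB_zero (i : Fin n) (p q : Fin g) : gB i p * gB i q = 0 := by
  have h := RingQuot.mkAlgHom_rel ℚ (SurfRel.bb i p q)
  rw [map_mul, map_zero] at h
  exact h

lemma gBB_zero' (i : Fin n) (p q : Fin g) (x : SurfCoh n g) :
    gB i p * (gB i q * x) = 0 := by
  rw [← mul_assoc, gBB_zero, zero_mul]

lemma gW_eq (i : Fin n) (p : Fin g) : gW i = gA i p * gB i p := by
  have h := RingQuot.mkAlgHom_rel ℚ (SurfRel.ab_eq i p)
  rw [map_mul] at h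
  exact h.symm

end Aux

/-- In `A_g` (`g ≥ 2`, `n ≥ 3`), for distinct `i, j ∈ {2,…,n}`:
`y_i (x_i y_j) = -ω_i y_j + ω_1 y_j - y_1 x_i y_j + x_1 y_i y_j`. -/
theorem stmt9 (n g : ℕ) [NeZero n] [NeZero g] (hn : 3 ≤ n) (hg : 2 ≤ g)
    (i j : Fin n) (hi : i ≠ 0) (hj : j ≠ 0) (hij : i ≠ j) :
    yA i * (xA i * yA j) =
      (-(wA i * yA j) + wA 0 * yA j - yA 0 * xA i * yA j + xA 0 * yA i * yA j : SurfA n g) := by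
  have hx_i : gX (n := n) (g := g) i 0 = gA i 0 - gA 0 0 := if_pos ⟨rfl, hi⟩
  have hy_i : gY (n := n) (g := g) i 0 = gB i 0 - gB 0 0 := if_pos ⟨rfl, hi⟩
  have hy_j : gY (n := n) (g := g) j 0 = gB j 0 - gB 0 0 := if_pos ⟨rfl, hj⟩
  have hx_0 : gX (n := n) (g := g) 0 0 = gA 0 0 := if_neg (by simp)
  have hy_0 : gY (n := n) (g := g) 0 0 = gB 0 0 := if_neg (by simp)
  simp only [xA, yA, wA, hx_i, hy_i, hy_j, hx_0, hy_0,
    gW_eq i (0 : Fin g), gW_eq (0 : Fin n) (0 : Fin g),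
    ← map_mul, ← map_neg, ← map_sub, ← map_add]
  congr 1
  simp only [mul_sub, sub_mul, mul_neg, neg_mul, mul_assoc, neg_neg,
    gA_swap i 0 0 0, gA_swap' i 0 0 0,
    gBA_swap 0 0 0 0, gBA_swap' 0 0 0 0,
    gBA_swap 0 i 0 0, gBA_swap' 0 i 0 0,
    gBA_swap i 0 0 0, gBA_swap' i 0 0 0,
    gBA_swap i i 0 0, gBA_swap' i i 0 0,
    gBA_swap j 0 0 0, gBA_swap' j 0 0 0,
    gBA_swap j i 0 0, gBA_swap' j i 0 0,
    gB_swap i 0 0 0, gB_swap' i 0 0 0,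
    gB_swap j 0 0 0, gB_swap' j 0 0 0,
    gB_swap j i 0 0, gB_swap' j i 0 0,
    gAA_zero, gAA_zero', gBB_zero i 0 0, gBB_zero' i 0 0,
    gBB_zero 0 0 0, gBB_zero' 0 0 0, gBB_zero j 0 0, gBB_zero' j 0 0]
  abel
end

section
/- In the 2-fold tensor square of B_g (g ≥ 2, n ≥ 2), with c = a_1(2) ⊗ 1 − 1 ⊗ a_1(2) and d = b_1(2) ⊗ 1 − 1 ⊗ b_1(2), one has c·d·(x_1 ⊗ 1 − 1 ⊗ x_1)(y_1 ⊗ 1 − 1 ⊗ y_1) = 2 ω_1 ⊗ ω_1. -/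
/-- The generator `u` placed in the left (`s = true`) or right (`s = false`) tensor factor. -/
noncomputable def fgen {n g : ℕ} (s : Bool) (u : SurfGen n g) :
    FreeAlgebra ℚ (SurfGen n g ⊕ SurfGen n g) :=
  FreeAlgebra.ι ℚ (if s then Sum.inl u else Sum.inr u)

/-- `a_{i+1}(p+1)` in the factor `s`. -/
noncomputable def fA {n g : ℕ} (s : Bool) (i : Fin n) (p : Fin g) :
    FreeAlgebra ℚ (SurfGen n g ⊕ SurfGen n g) :=
  fgen s (SurfGen.a i p)

/-- `b_{i+1}(p+1)` in the factor `s`. -/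
noncomputable def fB {n g : ℕ} (s : Bool) (i : Fin n) (p : Fin g) :
    FreeAlgebra ℚ (SurfGen n g ⊕ SurfGen n g) :=
  fgen s (SurfGen.b i p)

/-- `ω_{i+1}` in the factor `s`. -/
noncomputable def fW {n g : ℕ} (s : Bool) (i : Fin n) :
    FreeAlgebra ℚ (SurfGen n g ⊕ SurfGen n g) :=
  fgen s (SurfGen.w i)

/-- `x_{i+1}(p+1)` in the factor `s`. -/
noncomputable def fX {n g : ℕ} [NeZero n] [NeZero g] (s : Bool) (i : Fin n) (p : Fin g) :
    FreeAlgebra ℚ (SurfGen n g ⊕ SurfGen n g) :=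
  if p = 0 ∧ i ≠ 0 then fA s i p - fA s 0 p else fA s i p

/-- `y_{i+1}(p+1)` in the factor `s`. -/
noncomputable def fY {n g : ℕ} [NeZero n] [NeZero g] (s : Bool) (i : Fin n) (p : Fin g) :
    FreeAlgebra ℚ (SurfGen n g ⊕ SurfGen n g) :=
  if p = 0 ∧ i ≠ 0 then fB s i p - fB s 0 p else fB s i p

/-- The embedding of the free algebra on one copy of the generators onto the factor `s`. -/
noncomputable def embSide {n g : ℕ} (s : Bool) :
    FreeAlgebra ℚ (SurfGen n g) →ₐ[ℚ] FreeAlgebra ℚ (SurfGen n g ⊕ SurfGen n g) :=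
  FreeAlgebra.lift ℚ (fun u => fgen s u)

/-- The relations presenting the graded (Koszul-signed) tensor square `B_g ⊗ B_g`:
the defining relations of `H^*(Σ_g^{×n}; ℚ)` in each tensor factor, the Koszul sign rule
between the two factors, and the relations defining `A_g` and `B_g` in each factor. -/
inductive TRel (n g : ℕ) [NeZero n] [NeZero g] :
    FreeAlgebra ℚ (SurfGen n g ⊕ SurfGen n g) → FreeAlgebra ℚ (SurfGen n g ⊕ SurfGen n g) → Prop
  | side (s : Bool) {x y : FreeAlgebra ℚ (SurfGen n g)} :
      SurfRel n g x y → TRel n g (embSide s x) (embSide s y)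
  | cross (u v : SurfGen n g) :
      TRel n g (fgen false v * fgen true u)
        (((-1 : ℚ) ^ (u.deg * v.deg)) • (fgen true u * fgen false v))
  | arel_xx (s : Bool) (i j : Fin n) (p q : Fin g) :
      i ≠ j → p ≠ 0 → q ≠ 0 → TRel n g (fX s i p * fX s j q) 0
  | arel_xy (s : Bool) (i j : Fin n) (p q : Fin g) :
      i ≠ j → p ≠ 0 → q ≠ 0 → TRel n g (fX s i p * fY s j q) 0
  | arel_yy (s : Bool) (i j : Fin n) (p q : Fin g) :
      i ≠ j → p ≠ 0 → q ≠ 0 → TRel n g (fY s i p * fY s j q) 0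
  | brel (s : Bool) (i j : Fin n) :
      i ≠ 0 → j ≠ 0 → TRel n g (fX s i 0 * fY s j 0) 0

/-- The graded tensor square `B_g ⊗ B_g`, presented by generators and relations. -/
def BTensorSq (n g : ℕ) [NeZero n] [NeZero g] : Type := RingQuot (TRel n g)

noncomputable instance (n g : ℕ) [NeZero n] [NeZero g] : Ring (BTensorSq n g) :=
  inferInstanceAs (Ring (RingQuot (TRel n g)))

noncomputable instance (n g : ℕ) [NeZero n] [NeZero g] : Algebra ℚ (BTensorSq n g) :=
  inferInstanceAs (Algebra ℚ (RingQuot (TRel n g)))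

/-- The quotient map onto `B_g ⊗ B_g`. -/
noncomputable def mkT (n g : ℕ) [NeZero n] [NeZero g] :
    FreeAlgebra ℚ (SurfGen n g ⊕ SurfGen n g) →ₐ[ℚ] BTensorSq n g :=
  RingQuot.mkAlgHom ℚ (TRel n g)

set_option linter.unusedSectionVars false

section Aux

variable {n g : ℕ} [NeZero n] [NeZero g]

theorem embSide_ι (s : Bool) (u : SurfGen n g) :
    embSide (n := n) (g := g) s (FreeAlgebra.ι ℚ u) = fgen s u := by
  simp [embSide, FreeAlgebra.lift_ι_apply]

theorem mkT_fgen_mul (s : Bool) (u v : SurfGen n g) :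
    mkT n g (fgen s u) * mkT n g (fgen s v)
      = mkT n g (embSide s (FreeAlgebra.ι ℚ u * FreeAlgebra.ι ℚ v)) := by
  rw [map_mul, embSide_ι, embSide_ι, map_mul]

theorem mkT_aa (s : Bool) (i : Fin n) (p q : Fin g) :
    mkT n g (fgen s (SurfGen.a i p)) * mkT n g (fgen s (SurfGen.a i q)) = 0 := by
  rw [mkT_fgen_mul]
  exact (RingQuot.mkAlgHom_rel ℚ (TRel.side s (SurfRel.aa i p q))).trans (by simp; rfl)

theorem mkT_bb (s : Bool) (i : Fin n) (p q : Fin g) :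
    mkT n g (fgen s (SurfGen.b i p)) * mkT n g (fgen s (SurfGen.b i q)) = 0 := by
  rw [mkT_fgen_mul]
  exact (RingQuot.mkAlgHom_rel ℚ (TRel.side s (SurfRel.bb i p q))).trans (by simp; rfl)

theorem mkT_ab_eq (s : Bool) (i : Fin n) (p : Fin g) :
    mkT n g (fgen s (SurfGen.a i p)) * mkT n g (fgen s (SurfGen.b i p))
      = mkT n g (fgen s (SurfGen.w i)) := by
  rw [mkT_fgen_mul]
  exact (RingQuot.mkAlgHom_rel ℚ (TRel.side s (SurfRel.ab_eq i p))).trans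
    (by rw [embSide_ι]; rfl)

theorem mkT_ab_ne (s : Bool) (i : Fin n) (p q : Fin g) (h : p ≠ q) :
    mkT n g (fgen s (SurfGen.a i p)) * mkT n g (fgen s (SurfGen.b i q)) = 0 := by
  rw [mkT_fgen_mul]
  exact (RingQuot.mkAlgHom_rel ℚ (TRel.side s (SurfRel.ab_ne i p q h))).trans (by simp; rfl)

theorem mkT_koszul (s : Bool) (u v : SurfGen n g) :
    mkT n g (fgen s u) * mkT n g (fgen s v)
      = ((-1 : ℚ) ^ (u.deg * v.deg)) • (mkT n g (fgen s v) * mkT n g (fgen s u)) := by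
  rw [mkT_fgen_mul]
  refine (RingQuot.mkAlgHom_rel ℚ (TRel.side s (SurfRel.koszul u v))).trans ?_
  rw [map_smul, map_smul, map_mul, embSide_ι, embSide_ι, map_mul]; rfl

theorem mkT_koszul₁ (s : Bool) (u v : SurfGen n g) (hu : u.deg = 1) (hv : v.deg = 1) :
    mkT n g (fgen s u) * mkT n g (fgen s v)
      = -(mkT n g (fgen s v) * mkT n g (fgen s u)) := by
  rw [mkT_koszul s u v, hu, hv]
  norm_num

theorem mkT_cross (u v : SurfGen n g) :
    mkT n g (fgen false v) * mkT n g (fgen true u)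
      = ((-1 : ℚ) ^ (u.deg * v.deg)) • (mkT n g (fgen true u) * mkT n g (fgen false v)) := by
  have := RingQuot.mkAlgHom_rel ℚ (TRel.cross (n := n) (g := g) u v)
  simp only [map_mul, map_smul] at this
  exact this

theorem mkT_cross₁ (u v : SurfGen n g) (hu : u.deg = 1) (hv : v.deg = 1) :
    mkT n g (fgen false v) * mkT n g (fgen true u)
      = -(mkT n g (fgen true u) * mkT n g (fgen false v)) := by
  rw [mkT_cross u v, hu, hv]
  norm_num

theorem mkT_cross₁' (u v : SurfGen n g) (hu : u.deg = 1) (hv : v.deg = 1) :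
    mkT n g (fgen true u) * mkT n g (fgen false v)
      = -(mkT n g (fgen false v) * mkT n g (fgen true u)) := by
  rw [mkT_cross₁ u v hu hv, neg_neg]

end Aux

/-- In the (Koszul-signed) tensor square of `B_g` (`g ≥ 2`, `n ≥ 2`), with
`c = a_1(2) ⊗ 1 - 1 ⊗ a_1(2)`, `d = b_1(2) ⊗ 1 - 1 ⊗ b_1(2)`, one has
`c · d · (x_1 ⊗ 1 - 1 ⊗ x_1)(y_1 ⊗ 1 - 1 ⊗ y_1) = 2 ω_1 ⊗ ω_1`. -/
theorem stmt16 (n g : ℕ) [NeZero n] [NeZero g] (hn : 2 ≤ n) (hg : 2 ≤ g) :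
    (mkT n g (fA true 0 (1 : Fin g)) - mkT n g (fA false 0 1)) *
        (mkT n g (fB true 0 (1 : Fin g)) - mkT n g (fB false 0 1)) *
        ((mkT n g (fA true 0 (0 : Fin g)) - mkT n g (fA false 0 0)) *
          (mkT n g (fB true 0 (0 : Fin g)) - mkT n g (fB false 0 0))) =
      2 * (mkT n g (fW true 0) * mkT n g (fW false 0)) := by
  have h10 : (1 : Fin g) ≠ 0 := by
    have h1 : ((1 : Fin g) : ℕ) = 1 := by
      rw [Fin.val_one']
      exact Nat.mod_eq_of_lt (by omega)
    intro h
    rw [Fin.ext_iff, h1] at h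
    simp at h
  -- abbreviations
  set a := mkT n g (fgen true (SurfGen.a (0 : Fin n) (1 : Fin g))) with ha_def
  set a' := mkT n g (fgen false (SurfGen.a (0 : Fin n) (1 : Fin g))) with ha'_def
  set b := mkT n g (fgen true (SurfGen.b (0 : Fin n) (1 : Fin g))) with hb_def
  set b' := mkT n g (fgen false (SurfGen.b (0 : Fin n) (1 : Fin g))) with hb'_def
  set x := mkT n g (fgen true (SurfGen.a (0 : Fin n) (0 : Fin g))) with hx_def
  set x' := mkT n g (fgen false (SurfGen.a (0 : Fin n) (0 : Fin g))) with hx'_def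
  set y := mkT n g (fgen true (SurfGen.b (0 : Fin n) (0 : Fin g))) with hy_def
  set y' := mkT n g (fgen false (SurfGen.b (0 : Fin n) (0 : Fin g))) with hy'_def
  set Wt := mkT n g (fgen true (SurfGen.w (0 : Fin n))) with hWt_def
  set Wf := mkT n g (fgen false (SurfGen.w (0 : Fin n))) with hWf_def
  show (a - a') * (b - b') * ((x - x') * (y - y')) = 2 * (Wt * Wf)
  -- products equal to ω
  have hab : a * b = Wt := mkT_ab_eq true 0 1
  have ha'b' : a' * b' = Wf := mkT_ab_eq false 0 1
  have hxy : x * y = Wt := mkT_ab_eq true 0 0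
  have hx'y' : x' * y' = Wf := mkT_ab_eq false 0 0
  -- vanishing products
  have hax : a * x = 0 := mkT_aa true 0 1 0
  have ha'x' : a' * x' = 0 := mkT_aa false 0 1 0
  have hby : b * y = 0 := mkT_bb true 0 1 0
  have hb'y' : b' * y' = 0 := mkT_bb false 0 1 0
  have hay : a * y = 0 := mkT_ab_ne true 0 1 0 h10
  have ha'y' : a' * y' = 0 := mkT_ab_ne false 0 1 0 h10
  -- sign commutation rules
  have hbx : b * x = -(x * b) :=
    mkT_koszul₁ true (SurfGen.b 0 1) (SurfGen.a 0 0) rfl rfl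
  have hb'x' : b' * x' = -(x' * b') :=
    mkT_koszul₁ false (SurfGen.b 0 1) (SurfGen.a 0 0) rfl rfl
  have hb'x : b' * x = -(x * b') :=
    mkT_cross₁ (SurfGen.a 0 0) (SurfGen.b 0 1) rfl rfl
  have hbx' : b * x' = -(x' * b) :=
    mkT_cross₁' (SurfGen.b 0 1) (SurfGen.a 0 0) rfl rfl
  have hby' : b * y' = -(y' * b) :=
    mkT_cross₁' (SurfGen.b 0 1) (SurfGen.b 0 0) rfl rfl
  have hb'y : b' * y = -(y * b') :=
    mkT_cross₁ (SurfGen.b 0 0) (SurfGen.b 0 1) rfl rfl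
  have hxy'c : x * y' = -(y' * x) :=
    mkT_cross₁' (SurfGen.a 0 0) (SurfGen.b 0 0) rfl rfl
  have hx'y : x' * y = -(y * x') :=
    mkT_cross₁ (SurfGen.b 0 0) (SurfGen.a 0 0) rfl rfl
  have hww : Wf * Wt = Wt * Wf := by
    rw [hWf_def, hWt_def, mkT_cross]
    norm_num [SurfGen.deg]
  -- the sixteen quadruple products
  have t1 : ∀ η : BTensorSq n g, a * b * (x * η) = 0 := by
    intro η
    calc a * b * (x * η) = a * (b * x) * η := by noncomm_ring
    _ = a * (-(x * b)) * η := by rw [hbx]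
    _ = -((a * x) * (b * η)) := by noncomm_ring
    _ = 0 := by rw [hax]; simp
  have t2 : ∀ η : BTensorSq n g, a * b' * (x * η) = 0 := by
    intro η
    calc a * b' * (x * η) = a * (b' * x) * η := by noncomm_ring
    _ = a * (-(x * b')) * η := by rw [hb'x]
    _ = -((a * x) * (b' * η)) := by noncomm_ring
    _ = 0 := by rw [hax]; simp
  have t3 : ∀ η : BTensorSq n g, a' * b * (x' * η) = 0 := by
    intro η
    calc a' * b * (x' * η) = a' * (b * x') * η := by noncomm_ring
    _ = a' * (-(x' * b)) * η := by rw [hbx']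
    _ = -((a' * x') * (b * η)) := by noncomm_ring
    _ = 0 := by rw [ha'x']; simp
  have t4 : ∀ η : BTensorSq n g, a' * b' * (x' * η) = 0 := by
    intro η
    calc a' * b' * (x' * η) = a' * (b' * x') * η := by noncomm_ring
    _ = a' * (-(x' * b')) * η := by rw [hb'x']
    _ = -((a' * x') * (b' * η)) := by noncomm_ring
    _ = 0 := by rw [ha'x']; simp
  have t5 : a * b * (x' * y) = 0 := by
    calc a * b * (x' * y) = a * (b * x') * y := by noncomm_ring
    _ = a * (-(x' * b)) * y := by rw [hbx']
    _ = -(a * x' * (b * y)) := by noncomm_ring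
    _ = 0 := by rw [hby]; simp
  have t6 : a' * b * (x * y) = 0 := by
    calc a' * b * (x * y) = a' * (b * x) * y := by noncomm_ring
    _ = a' * (-(x * b)) * y := by rw [hbx]
    _ = -(a' * x * (b * y)) := by noncomm_ring
    _ = 0 := by rw [hby]; simp
  have t7 : a * b' * (x' * y') = 0 := by
    calc a * b' * (x' * y') = a * (b' * x') * y' := by noncomm_ring
    _ = a * (-(x' * b')) * y' := by rw [hb'x']
    _ = -(a * x' * (b' * y')) := by noncomm_ring
    _ = 0 := by rw [hb'y']; simp
  have t8 : a' * b' * (x * y') = 0 := by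
    calc a' * b' * (x * y') = a' * (b' * x) * y' := by noncomm_ring
    _ = a' * (-(x * b')) * y' := by rw [hb'x]
    _ = -(a' * x * (b' * y')) := by noncomm_ring
    _ = 0 := by rw [hb'y']; simp
  have t9 : a * b' * (x' * y) = 0 := by
    calc a * b' * (x' * y) = a * (b' * x') * y := by noncomm_ring
    _ = a * (-(x' * b')) * y := by rw [hb'x']
    _ = -(a * x' * (b' * y)) := by noncomm_ring
    _ = -(a * x' * (-(y * b'))) := by rw [hb'y]
    _ = a * (x' * y) * b' := by noncomm_ring
    _ = a * (-(y * x')) * b' := by rw [hx'y]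
    _ = -((a * y) * (x' * b')) := by noncomm_ring
    _ = 0 := by rw [hay]; simp
  have t10 : a' * b * (x * y') = 0 := by
    calc a' * b * (x * y') = a' * (b * x) * y' := by noncomm_ring
    _ = a' * (-(x * b)) * y' := by rw [hbx]
    _ = -(a' * x * (b * y')) := by noncomm_ring
    _ = -(a' * x * (-(y' * b))) := by rw [hby']
    _ = a' * (x * y') * b := by noncomm_ring
    _ = a' * (-(y' * x)) * b := by rw [hxy'c]
    _ = -((a' * y') * (x * b)) := by noncomm_ring
    _ = 0 := by rw [ha'y']; simp
  have tWW : a * b * (x' * y') = Wt * Wf := by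
    rw [mul_assoc, ← mul_assoc, hab, hx'y']
  have tWW' : a' * b' * (x * y) = Wt * Wf := by
    rw [mul_assoc, ← mul_assoc, ha'b', hxy, hww]
  have expand : (a - a') * (b - b') * ((x - x') * (y - y'))
      = a * b * (x * y) - a * b * (x * y') - a * b * (x' * y) + a * b * (x' * y')
        - a * b' * (x * y) + a * b' * (x * y') + a * b' * (x' * y) - a * b' * (x' * y')
        - a' * b * (x * y) + a' * b * (x * y') + a' * b * (x' * y) - a' * b * (x' * y')
        + a' * b' * (x * y) - a' * b' * (x * y') - a' * b' * (x' * y) + a' * b' * (x' * y') := by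
    noncomm_ring
  rw [expand, t1 y, t1 y', t5, tWW, t2 y, t2 y', t9, t7, t6, t10, t3 y, t3 y',
    tWW', t8, t4 y, t4 y']
  noncomm_ring
end
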